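/- Let (Q, S, μ) be a fuzzy skill multimap and (Q, 𝒦) the delineated knowledge structure. Then (Q, 𝒦) is bi-discriminative if and only if for any two distinct items q, r ∈ Q, both μ(q) ⋠ μ(r) and μ(r) ⋠ μ(q). -/
import Mathlib


/-- A fuzzy set on a set `S` of skills: a function `S → [0,1]`, ordered pointwise. -/
abbrev FuzzySet (S : Type*) := S → unitInterval

/-- The problem function induced by a fuzzy skill multimap `μ`:
`p(F) = {q | ∃ C ∈ μ(q), C ⊆ F}`. -/
def pfun {Q S : Type*} (μ : Q → Set (FuzzySet S)) (F : FuzzySet S) : Set Q :=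
  {q | ∃ C ∈ μ q, C ≤ F}

/-- The knowledge structure delineated by a fuzzy skill multimap `μ`. -/
def delineated {Q S : Type*} (μ : Q → Set (FuzzySet S)) : Set (Set Q) :=
  Set.range (pfun μ)

/-- `𝒦_q = {K ∈ 𝒦 | q ∈ K}`. -/
def Kq {Q : Type*} (𝒦 : Set (Set Q)) (q : Q) : Set (Set Q) := {K ∈ 𝒦 | q ∈ K}

/-- A knowledge structure is discriminative if `𝒦_q ≠ 𝒦_r` for distinct `q, r`. -/
def Discriminative {Q : Type*} (𝒦 : Set (Set Q)) : Prop :=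
  ∀ q r : Q, q ≠ r → Kq 𝒦 q ≠ Kq 𝒦 r

/-- A knowledge structure is bi-discriminative if `𝒦_q ⊄ 𝒦_r` and `𝒦_r ⊄ 𝒦_q`
for distinct `q, r`. -/
def BiDiscriminative {Q : Type*} (𝒦 : Set (Set Q)) : Prop :=
  ∀ q r : Q, q ≠ r → ¬ Kq 𝒦 q ⊆ Kq 𝒦 r ∧ ¬ Kq 𝒦 r ⊆ Kq 𝒦 q

/-- `μ` is a fuzzy skill multimap: each `μ(q)` is a nonempty family of nonzero fuzzy sets. -/
def FSM {Q S : Type*} (μ : Q → Set (FuzzySet S)) : Prop :=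
  ∀ q, (μ q).Nonempty ∧ ∀ C ∈ μ q, C ≠ 0

/-- A molecule: a fuzzy set with exactly one skill of nonzero membership. -/
def Molecule {S : Type*} (T : FuzzySet S) : Prop := ∃! s, T s ≠ 0

/-- A knowledge space: a knowledge structure closed under unions of arbitrary subfamilies. -/
def IsKSpace {Q : Type*} (𝒦 : Set (Set Q)) : Prop :=
  ∅ ∈ 𝒦 ∧ Set.univ ∈ 𝒦 ∧ ∀ 𝒮 ⊆ 𝒦, ⋃₀ 𝒮 ∈ 𝒦

/-- `𝒰 ≼ 𝒱`: `𝒰` is refined by `𝒱`, i.e. every `U ∈ 𝒰` contains some `V ∈ 𝒱`. -/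
def Refines {S : Type*} (U V : Set (FuzzySet S)) : Prop :=
  ∀ C ∈ U, ∃ D ∈ V, D ≤ C


lemma kq_subset_iff {Q S : Type*} (μ : Q → Set (FuzzySet S)) (q r : Q) :
    Kq (delineated μ) q ⊆ Kq (delineated μ) r ↔ Refines (μ q) (μ r) := by
  constructor
  · intro h C hC
    have hq : pfun μ C ∈ Kq (delineated μ) q :=
      ⟨⟨C, rfl⟩, ⟨C, hC, le_refl C⟩⟩
    obtain ⟨-, D, hD, hle⟩ := h hq
    exact ⟨D, hD, hle⟩
  · rintro h K ⟨⟨F, rfl⟩, C, hC, hle⟩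
    obtain ⟨D, hD, hDC⟩ := h C hC
    exact ⟨⟨F, rfl⟩, D, hD, le_trans hDC hle⟩

/-- The delineated knowledge structure is bi-discriminative iff for all
distinct `q, r`, both `μ(q) ⋠ μ(r)` and `μ(r) ⋠ μ(q)`. -/
theorem stmt_14 {Q S : Type*} [Nonempty Q] [Nonempty S]
    (μ : Q → Set (FuzzySet S)) (hFSM : FSM μ) :
    BiDiscriminative (delineated μ) ↔
      ∀ q r : Q, q ≠ r → ¬ Refines (μ q) (μ r) ∧ ¬ Refines (μ r) (μ q) := by
  unfold BiDiscriminative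
  simp only [kq_subset_iff]
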